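/- For each ε > 0 and a > 0, the set W(ε) = ∩_m ∪_{n ≥ m} { x ∈ ℝ : s(n,x) ∈ ((1−ε)π(n)/2, (1+ε)π(n)/2) } is a dense Gδ subset of ℝ, where s(n,x) = Σ_{k=1}^n sin²(x(k-1)!/k) and π(n) is the prime counting function. -/

import Mathlib

noncomputable def s (n : ℕ) (x : ℝ) : ℝ :=
  ∑ k ∈ Finset.Icc 1 n, Real.sin (x * (k - 1).factorial / k) ^ 2

namespace Stmt18Aux

open Real Set Finset

/-- frequency of the `k`-th term -/
noncomputable def c (k : ℕ) : ℝ := ((k - 1).factorial : ℝ) / k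

/-- length of the `k`-th nested interval -/
noncomputable def Len (k : ℕ) : ℝ := 2 * π / ((k - 1).factorial : ℝ)

lemma c_pos {k : ℕ} (hk : 1 ≤ k) : 0 < c k := by
  apply div_pos
  · exact_mod_cast Nat.factorial_pos _
  · exact_mod_cast hk

lemma Len_pos (k : ℕ) : 0 < Len k := by
  apply div_pos (by positivity)
  exact_mod_cast Nat.factorial_pos _

lemma mul_c {k : ℕ} (hk : 1 ≤ k) : (k : ℝ) * c k = ((k - 1).factorial : ℝ) := by
  have : (k : ℝ) ≠ 0 := by exact Nat.cast_ne_zero.mpr (by omega)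
  simp only [c]
  field_simp

lemma c_succ {k : ℕ} (hk : 1 ≤ k) :
    c (k + 1) = (k : ℝ) * k / (k + 1) * c k := by
  have h : (k.factorial : ℝ) = k * ((k - 1).factorial : ℝ) := by
    rw [← Nat.mul_factorial_pred (by omega : k ≠ 0)]; push_cast; ring
  have hk0 : (k : ℝ) ≠ 0 := by exact Nat.cast_ne_zero.mpr (by omega)
  have hk1 : (k : ℝ) + 1 ≠ 0 := by positivity
  simp only [c, Nat.add_sub_cancel, h]
  push_cast
  field_simp

/-- the explicit step function choosing the next left endpoint -/
noncomputable def stp (θ : ℝ) (k : ℕ) (t : ℝ) : ℝ :=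
  ((⌈(t * c k - θ + π / k) / π⌉ : ℝ) * π + θ - π / k) / c k

lemma step_spec (θ : ℝ) {k : ℕ} (hk : 3 ≤ k) (t : ℝ) :
    t ≤ stp θ (k + 1) t ∧ stp θ (k + 1) t + Len (k + 1) ≤ t + Len k ∧
    ∀ x, stp θ (k + 1) t ≤ x → x ≤ stp θ (k + 1) t + Len (k + 1) →
      ∃ j : ℤ, |x * c (k + 1) - (θ + j * π)| ≤ π / ((k : ℝ) + 1) := by
  have hk1 : (1 : ℕ) ≤ k := by omega
  have hc' : 0 < c (k + 1) := c_pos (by omega)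
  have hck : 0 < c k := c_pos hk1
  have hK : (3 : ℝ) ≤ (k : ℝ) := by exact_mod_cast hk
  have hK0 : (0 : ℝ) < (k : ℝ) := by linarith
  set δ : ℝ := π / ((k : ℝ) + 1) with hδdef
  have hδ : 0 < δ := by positivity
  set j : ℤ := ⌈(t * c (k + 1) - θ + δ) / π⌉ with hjdef
  have hA : stp θ (k + 1) t = ((j : ℝ) * π + θ - δ) / c (k + 1) := by
    simp only [stp, hjdef, hδdef]
    push_cast
    ring_nf
  have h1 : t * c (k + 1) - θ + δ ≤ (j : ℝ) * π := by
    have := Int.le_ceil ((t * c (k + 1) - θ + δ) / π)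
    rw [div_le_iff₀ pi_pos] at this
    linarith [this]
  have h2 : (j : ℝ) * π < t * c (k + 1) - θ + δ + π := by
    have := Int.ceil_lt_add_one ((t * c (k + 1) - θ + δ) / π)
    have h' : (j : ℝ) * π < ((t * c (k + 1) - θ + δ) / π + 1) * π := by
      apply mul_lt_mul_of_pos_right _ pi_pos
      exact_mod_cast this
    rw [add_mul, div_mul_cancel₀ _ pi_pos.ne', one_mul] at h'
    exact h'
  have hLen1 : Len (k + 1) = 2 * δ / c (k + 1) := by
    have hm : ((k : ℝ) + 1) * c (k + 1) = (((k + 1) - 1).factorial : ℝ) := by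
      have := mul_c (k := k + 1) (by omega)
      push_cast at this ⊢
      linarith [this]
    rw [Len, ← hm, hδdef]
    have hk1' : (0 : ℝ) < (k : ℝ) + 1 := by positivity
    field_simp
  have hstep1 : t ≤ stp θ (k + 1) t := by
    rw [hA, le_div_iff₀ hc']
    linarith
  have hLenk : Len k = 2 * π / ((k : ℝ) * c k) := by
    rw [Len, mul_c hk1]
  have hcs : c (k + 1) = (k : ℝ) * k / (k + 1) * c k := c_succ hk1
  have hstep2 : stp θ (k + 1) t + Len (k + 1) ≤ t + Len k := by
    rw [hA, hLen1, hLenk]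
    have key : (2 * δ + π) / c (k + 1) ≤ 2 * π / ((k : ℝ) * c k) := by
      rw [hcs, div_le_div_iff₀ (by positivity) (by positivity), hδdef]
      rw [← sub_nonneg]
      have he : 2 * π * ((k:ℝ) * k / (k + 1) * c k) - (2 * (π / ((k:ℝ) + 1)) + π) * ((k:ℝ) * c k)
          = π * (k:ℝ) * c k * ((k:ℝ) - 3) / ((k:ℝ) + 1) := by
        field_simp
        ring
      rw [he]
      apply div_nonneg _ (by positivity)
      exact mul_nonneg (mul_nonneg (mul_nonneg pi_pos.le hK0.le) hck.le) (by linarith)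
    have : ((j : ℝ) * π + θ - δ) / c (k + 1) + 2 * δ / c (k + 1)
        = ((j : ℝ) * π + θ + δ) / c (k + 1) := by ring
    rw [this]
    have h3 : ((j : ℝ) * π + θ + δ) / c (k + 1) < t + (2 * δ + π) / c (k + 1) := by
      rw [div_lt_iff₀ hc', add_mul]
      rw [div_mul_cancel₀ _ hc'.ne']
      linarith
    linarith
  refine ⟨hstep1, hstep2, fun x hx1 hx2 => ⟨j, ?_⟩⟩
  rw [hA] at hx1
  rw [hA, hLen1] at hx2
  have hxc1 : (j : ℝ) * π + θ - δ ≤ x * c (k + 1) := by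
    rw [div_le_iff₀ hc'] at hx1
    nlinarith [hx1, hc']
  have hxc2 : x * c (k + 1) ≤ (j : ℝ) * π + θ + δ := by
    have : x ≤ ((j : ℝ) * π + θ + δ) / c (k + 1) := by
      have : ((j : ℝ) * π + θ - δ) / c (k + 1) + 2 * δ / c (k + 1)
          = ((j : ℝ) * π + θ + δ) / c (k + 1) := by ring
      linarith [hx2, this]
    rw [le_div_iff₀ hc'] at this
    nlinarith [this, hc']
  rw [abs_le]
  constructor <;> [linarith; linarith]

lemma key (θ : ℝ) {u v : ℝ} (huv : u < v) (m : ℕ) :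
    ∃ x ∈ Set.Ioo u v, ∃ k₁ : ℕ, m ≤ k₁ ∧ 1 ≤ k₁ ∧
      ∀ k, k₁ ≤ k → ∃ j : ℤ, |x * c k - (θ + j * π)| ≤ π / k := by
  set k₀ : ℕ := max (max m 4) (⌈4 * π / (v - u)⌉₊ + 2) with hk₀def
  have hk₀4 : 4 ≤ k₀ := le_trans (le_max_right m 4) (le_max_left _ _)
  have hk₀m : m ≤ k₀ := le_trans (le_max_left m 4) (le_max_left _ _)
  have huv' : (0 : ℝ) < v - u := by linarith
  have hLen₀ : Len k₀ ≤ (v - u) / 2 := by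
    have h1 : (4 * π / (v - u)) < ((k₀ - 1).factorial : ℝ) := by
      have h2 : (⌈4 * π / (v - u)⌉₊ : ℝ) < ((k₀ - 1 : ℕ) : ℝ) := by
        have : ⌈4 * π / (v - u)⌉₊ + 1 ≤ k₀ - 1 := by
          have := le_max_right (max m 4) (⌈4 * π / (v - u)⌉₊ + 2)
          omega
        exact_mod_cast Nat.lt_of_succ_le this
      have h3 : ((k₀ - 1 : ℕ) : ℝ) ≤ ((k₀ - 1).factorial : ℝ) := by
        exact_mod_cast Nat.self_le_factorial _
      calc 4 * π / (v - u) ≤ (⌈4 * π / (v - u)⌉₊ : ℝ) := Nat.le_ceil _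
        _ < _ := lt_of_lt_of_le h2 h3
    rw [Len, div_le_div_iff₀ (by exact_mod_cast Nat.factorial_pos _) (by norm_num)]
    have hppos : (0 : ℝ) < 4 * π / (v - u) := by positivity
    rw [div_lt_iff₀ huv'] at h1
    nlinarith [h1]
  -- the recursive sequence of left endpoints
  set a : ℕ → ℝ := fun i => Nat.rec (u + (v - u) / 4) (fun i t => stp θ (k₀ + i + 1) t) i
    with hadef
  have ha0 : a 0 = u + (v - u) / 4 := rfl
  have haS : ∀ i, a (i + 1) = stp θ (k₀ + i + 1) (a i) := fun i => rfl
  have hstep : ∀ i, a i ≤ a (i + 1) ∧ a (i + 1) + Len (k₀ + i + 1) ≤ a i + Len (k₀ + i) ∧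
      ∀ x, a (i + 1) ≤ x → x ≤ a (i + 1) + Len (k₀ + i + 1) →
        ∃ j : ℤ, |x * c (k₀ + i + 1) - (θ + j * π)| ≤ π / ((k₀ + i : ℝ) + 1) := by
    intro i
    have h := step_spec θ (k := k₀ + i) (by omega) (a i)
    rw [← haS i] at h
    push_cast at h
    exact h
  have hmono : Monotone a := monotone_nat_of_le_succ fun i => (hstep i).1
  have hanti : Antitone (fun i => a i + Len (k₀ + i)) :=
    antitone_nat_of_succ_le fun i => (hstep i).2.1
  have hbd : ∀ i_, a i_ ≤ a 0 + Len k₀ := by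
    intro i
    have h1 : a i ≤ a i + Len (k₀ + i) := le_add_of_nonneg_right (Len_pos _).le
    have h2 := hanti (Nat.zero_le i)
    simp only [Nat.add_zero] at h2
    linarith
  have hbdd : BddAbove (Set.range a) := ⟨a 0 + Len k₀, by rintro _ ⟨i, rfl⟩; exact hbd i⟩
  set x : ℝ := ⨆ i, a i with hxdef
  have hax : ∀ i, a i ≤ x := fun i => le_ciSup hbdd i
  have hxa : ∀ i, x ≤ a i + Len (k₀ + i) := by
    intro i
    apply ciSup_le
    intro i'
    rcases le_total i i' with h | h
    · have h1 : a i' ≤ a i' + Len (k₀ + i') := le_add_of_nonneg_right (Len_pos _).le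
      have h2 := hanti h
      simp only at h2
      linarith
    · exact le_trans (hmono h) (le_add_of_nonneg_right (Len_pos _).le)
  have hxIoo : x ∈ Set.Ioo u v := by
    constructor
    · have := hax 0
      rw [ha0] at this
      linarith
    · have h1 := hxa 0
      simp only [Nat.add_zero] at h1
      rw [ha0] at h1
      linarith [hLen₀]
  refine ⟨x, hxIoo, k₀ + 1, by omega, by omega, ?_⟩
  intro k hk
  obtain ⟨i, rfl⟩ : ∃ i, k = k₀ + i + 1 := ⟨k - k₀ - 1, by omega⟩
  obtain ⟨j, hj⟩ := (hstep i).2.2 x (hax (i + 1)) (hxa (i + 1))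
  refine ⟨j, ?_⟩
  have hc : ((k₀ + i + 1 : ℕ) : ℝ) = (k₀ + i : ℝ) + 1 := by push_cast; ring
  rw [hc]
  exact hj

lemma sum_inv_sq_le (n : ℕ) : ∑ k ∈ Finset.Icc 1 n, (1 : ℝ) / (k : ℝ) ^ 2 ≤ 2 := by
  have H : ∀ n : ℕ, 1 ≤ n → ∑ k ∈ Finset.Icc 1 n, (1 : ℝ) / (k : ℝ) ^ 2 ≤ 2 - 1 / n := by
    intro n hn
    induction n, hn using Nat.le_induction with
    | base => simp; norm_num
    | succ n hn ih =>
      rw [Finset.sum_Icc_succ_top (by omega)]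
      have hn' : (0 : ℝ) < n := by exact_mod_cast hn
      have h1 : (1 : ℝ) / ((n : ℝ) + 1) ^ 2 ≤ 1 / n - 1 / (n + 1) := by
        rw [div_sub_div _ _ hn'.ne' (by positivity), div_le_div_iff₀ (by positivity) (by positivity)]
        ring_nf
        nlinarith [hn']
      push_cast
      linarith [ih]
  rcases Nat.eq_zero_or_pos n with rfl | hn
  · simp
  · have := H n hn
    have : (0:ℝ) < n := by exact_mod_cast hn
    have := H n hn
    have h1 : (0:ℝ) ≤ 1 / (n:ℝ) := by positivity
    linarith

lemma s_eq (n : ℕ) (x : ℝ) : s n x = ∑ k ∈ Finset.Icc 1 n, Real.sin (x * c k) ^ 2 := by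
  unfold s
  apply Finset.sum_congr rfl
  intro k _
  rw [c, ← mul_div_assoc]

lemma s_cont (n : ℕ) : Continuous (s n) := by
  unfold s
  apply continuous_finset_sum
  intro k _
  exact ((Real.continuous_sin.comp ((continuous_id.mul continuous_const).div_const _)).pow 2)

lemma s_nonneg_term (x : ℝ) (k : ℕ) : (0:ℝ) ≤ Real.sin (x * c k) ^ 2 := sq_nonneg _

/-- In every interval there is a point where `s n x` stays bounded in `n`. -/
lemma exists_bounded {u v : ℝ} (huv : u < v) :
    ∃ x ∈ Set.Ioo u v, ∃ B : ℝ, ∀ n, s n x ≤ B := by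
  obtain ⟨x, hx, k₁, -, hk₁1, hk⟩ := key 0 huv 1
  refine ⟨x, hx, (k₁ : ℝ) + 32, fun n => ?_⟩
  rw [s_eq]
  have hbound : ∀ k ∈ Finset.Icc 1 n,
      Real.sin (x * c k) ^ 2 ≤ (if k < k₁ then (1:ℝ) else 0) + π ^ 2 * (1 / (k:ℝ) ^ 2) := by
    intro k hkmem
    simp only [Finset.mem_Icc] at hkmem
    by_cases h : k < k₁
    · simp only [h, if_pos]
      have := Real.sin_sq_le_one (x * c k)
      have h2 : (0:ℝ) ≤ π ^ 2 * (1 / (k:ℝ) ^ 2) := by positivity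
      linarith
    · simp only [h, if_neg, not_false_iff]
      push_neg at h
      obtain ⟨j, hj⟩ := hk k h
      have hkpos : (0:ℝ) < (k:ℝ) := by exact_mod_cast hkmem.1
      -- sin(x c k)^2 = sin(x c k - j π)^2 ≤ (π/k)^2
      have hper : Real.sin (x * c k) ^ 2 = Real.sin (x * c k - j * π) ^ 2 := by
        have := Real.sin_add_int_mul_pi (x * c k - j * π) j
        simp only [sub_add_cancel] at this
        rw [this, mul_pow]
        rcases Int.even_or_odd j with he | ho
        · rw [he.neg_one_zpow]; norm_num
        · rw [ho.neg_one_zpow]; norm_num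
      rw [hper]
      have h1 : Real.sin (x * c k - j * π) ^ 2 ≤ (x * c k - j * π) ^ 2 := Real.sin_sq_le_sq
      have h2 : (x * c k - j * π) ^ 2 ≤ (π / k) ^ 2 := by
        rw [← sq_abs (x * c k - j * π)]
        apply pow_le_pow_left₀ (abs_nonneg _)
        · calc |x * c k - j * π| = |x * c k - (0 + j * π)| := by ring_nf
            _ ≤ π / k := hj
      have h3 : (π / (k:ℝ)) ^ 2 = π ^ 2 * (1 / (k:ℝ) ^ 2) := by
        field_simp
      linarith [h1, h2, h3.le]
  calc ∑ k ∈ Finset.Icc 1 n, Real.sin (x * c k) ^ 2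
      ≤ ∑ k ∈ Finset.Icc 1 n, ((if k < k₁ then (1:ℝ) else 0) + π ^ 2 * (1 / (k:ℝ) ^ 2)) :=
        Finset.sum_le_sum hbound
    _ = (∑ k ∈ Finset.Icc 1 n, (if k < k₁ then (1:ℝ) else 0))
        + π ^ 2 * ∑ k ∈ Finset.Icc 1 n, (1 / (k:ℝ) ^ 2) := by
        rw [Finset.sum_add_distrib, Finset.mul_sum]
    _ ≤ (k₁ : ℝ) + π ^ 2 * 2 := by
        have h1 : (∑ k ∈ Finset.Icc 1 n, (if k < k₁ then (1:ℝ) else 0)) ≤ (k₁ : ℝ) := by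
          rw [Finset.sum_boole]
          have hsub : (Finset.Icc 1 n).filter (· < k₁) ⊆ Finset.Icc 1 k₁ := by
            intro k hk'
            simp only [Finset.mem_filter, Finset.mem_Icc] at hk' ⊢
            omega
          have := Finset.card_le_card hsub
          rw [Nat.card_Icc] at this
          exact_mod_cast le_trans (Nat.cast_le.mpr this) (by norm_num)
        have h2 := sum_inv_sq_le n
        have hπ : π ^ 2 ≤ 16 := by nlinarith [Real.pi_le_four, Real.pi_pos]
        nlinarith [h2, Real.pi_pos]
    _ ≤ (k₁ : ℝ) + 32 := by nlinarith [Real.pi_le_four, Real.pi_pos]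

/-- In every interval there is a point where `s n x` grows linearly. -/
lemma exists_large {u v : ℝ} (huv : u < v) :
    ∃ x ∈ Set.Ioo u v, ∃ C : ℕ, ∀ n, C ≤ n → (n : ℝ) - C ≤ s n x := by
  obtain ⟨x, hx, k₂, -, hk₂1, hk⟩ := key (π / 2) huv 1
  refine ⟨x, hx, k₂ + 32, fun n hn => ?_⟩
  rw [s_eq]
  have hsub : Finset.Icc k₂ n ⊆ Finset.Icc 1 n := by
    intro k hk'
    simp only [Finset.mem_Icc] at hk' ⊢
    omega
  have h0 : ∑ k ∈ Finset.Icc k₂ n, Real.sin (x * c k) ^ 2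
      ≤ ∑ k ∈ Finset.Icc 1 n, Real.sin (x * c k) ^ 2 :=
    Finset.sum_le_sum_of_subset_of_nonneg hsub (fun k _ _ => sq_nonneg _)
  have hterm : ∀ k ∈ Finset.Icc k₂ n,
      (1 : ℝ) - π ^ 2 * (1 / (k:ℝ) ^ 2) ≤ Real.sin (x * c k) ^ 2 := by
    intro k hkmem
    simp only [Finset.mem_Icc] at hkmem
    obtain ⟨j, hj⟩ := hk k hkmem.1
    have hkpos : (0:ℝ) < (k:ℝ) := by
      have : 1 ≤ k := le_trans hk₂1 hkmem.1
      exact_mod_cast this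
    set e : ℝ := x * c k - (π / 2 + j * π) with hedef
    clear_value e
    have hxe : x * c k = (e + π / 2) + j * π := by rw [hedef]; ring
    have hsin : Real.sin (x * c k) ^ 2 = Real.cos e ^ 2 := by
      rw [hxe, Real.sin_add_int_mul_pi, mul_pow, Real.sin_add_pi_div_two]
      rcases Int.even_or_odd j with he | ho
      · rw [he.neg_one_zpow]; norm_num
      · rw [ho.neg_one_zpow]; norm_num
    rw [hsin]
    have h1 : Real.sin e ^ 2 ≤ e ^ 2 := Real.sin_sq_le_sq
    have h2 : e ^ 2 ≤ (π / k) ^ 2 := by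
      rw [← sq_abs e]
      apply pow_le_pow_left₀ (abs_nonneg _) hj
    have h3 : Real.cos e ^ 2 = 1 - Real.sin e ^ 2 := by
      have := Real.sin_sq_add_cos_sq e
      linarith
    have h4 : (π / (k:ℝ)) ^ 2 = π ^ 2 * (1 / (k:ℝ) ^ 2) := by field_simp
    rw [h4] at h2
    rw [h3]
    linarith [h1, h2]
  have h5 : ∑ k ∈ Finset.Icc k₂ n, ((1 : ℝ) - π ^ 2 * (1 / (k:ℝ) ^ 2))
      ≤ ∑ k ∈ Finset.Icc k₂ n, Real.sin (x * c k) ^ 2 := Finset.sum_le_sum hterm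
  have h6 : ∑ k ∈ Finset.Icc k₂ n, ((1 : ℝ) - π ^ 2 * (1 / (k:ℝ) ^ 2))
      = (Finset.Icc k₂ n).card - π ^ 2 * ∑ k ∈ Finset.Icc k₂ n, (1 / (k:ℝ) ^ 2) := by
    rw [Finset.sum_sub_distrib, Finset.sum_const, Finset.mul_sum]
    simp
  have hcard : ((Finset.Icc k₂ n).card : ℝ) = (n : ℝ) + 1 - k₂ := by
    rw [Nat.card_Icc]
    have : k₂ ≤ n + 1 := by omega
    push_cast [Nat.cast_sub this]
    ring
  have h7 : ∑ k ∈ Finset.Icc k₂ n, (1 / (k:ℝ) ^ 2) ≤ 2 := by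
    refine le_trans (Finset.sum_le_sum_of_subset_of_nonneg ?_ (fun k _ _ => by positivity))
      (sum_inv_sq_le n)
    intro k hk'
    simp only [Finset.mem_Icc] at hk' ⊢
    omega
  have hπ : π ^ 2 ≤ 16 := by nlinarith [Real.pi_le_four, Real.pi_pos]
  have hπ2 : π ^ 2 * ∑ k ∈ Finset.Icc k₂ n, (1 / (k:ℝ) ^ 2) ≤ 32 := by
    have hs0 : (0:ℝ) ≤ ∑ k ∈ Finset.Icc k₂ n, (1 / (k:ℝ) ^ 2) :=
      Finset.sum_nonneg fun k _ => by positivity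
    nlinarith [h7, hs0, Real.pi_pos]
  have hk₂n : ((k₂ : ℝ) + 32) ≤ (n:ℝ) := by exact_mod_cast hn
  push_cast
  linarith [h0, h5, h6.ge, h6.le, hcard.le, hcard.ge, hπ2]

lemma primeCounting_le (n : ℕ) : Nat.primeCounting n ≤ n := by
  induction n with
  | zero =>
    show Nat.count Nat.Prime 1 ≤ 0
    rw [Nat.count_one]
    simp [Nat.not_prime_zero]
  | succ n ih =>
    show Nat.count Nat.Prime (n + 2) ≤ n + 1
    rw [Nat.count_succ]
    have : Nat.count Nat.Prime (n + 1) ≤ n := ih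
    split <;> omega

end Stmt18Aux

open Stmt18Aux Real Set Filter in
theorem stmt_18 (ε : ℝ) (hε : 0 < ε) :
    Dense (⋂ m : ℕ, ⋃ n ≥ m, {x : ℝ |
        s n x ∈ Set.Ioo ((1 - ε) * (Nat.primeCounting n : ℝ) / 2)
          ((1 + ε) * (Nat.primeCounting n : ℝ) / 2)}) ∧
    IsGδ (⋂ m : ℕ, ⋃ n ≥ m, {x : ℝ |
        s n x ∈ Set.Ioo ((1 - ε) * (Nat.primeCounting n : ℝ) / 2)
          ((1 + ε) * (Nat.primeCounting n : ℝ) / 2)}) := by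
  have hopen : ∀ m : ℕ, IsOpen (⋃ n ≥ m, {x : ℝ |
      s n x ∈ Set.Ioo ((1 - ε) * (Nat.primeCounting n : ℝ) / 2)
        ((1 + ε) * (Nat.primeCounting n : ℝ) / 2)}) := by
    intro m
    apply isOpen_iUnion
    intro n
    apply isOpen_iUnion
    intro _
    exact isOpen_Ioo.preimage (s_cont n)
  have hdense : ∀ m : ℕ, Dense (⋃ n ≥ m, {x : ℝ |
      s n x ∈ Set.Ioo ((1 - ε) * (Nat.primeCounting n : ℝ) / 2)
        ((1 + ε) * (Nat.primeCounting n : ℝ) / 2)}) := by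
    intro m
    rw [dense_iff_inter_open]
    rintro U hU ⟨x₀, hx₀⟩
    obtain ⟨r, hr, hball⟩ := Metric.isOpen_iff.mp hU x₀ hx₀
    rw [Real.ball_eq_Ioo] at hball
    have huv : x₀ - r < x₀ + r := by linarith
    obtain ⟨xm, hxm, B, hB⟩ := exists_bounded huv
    obtain ⟨xp, hxp, C, hC⟩ := exists_large huv
    -- choose n
    have hev : ∀ᶠ n : ℕ in atTop, (max 1 ⌈2 * B⌉₊ ≤ Nat.primeCounting n ∧ m ≤ n)
        ∧ 2 * C + 2 ≤ n := by
      refine (((Nat.tendsto_primeCounting.eventually_ge_atTop _).and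
        (eventually_ge_atTop m)).and (eventually_ge_atTop _))
    obtain ⟨n, ⟨⟨hpc, hnm⟩, hnC⟩⟩ := hev.exists
    set p : ℝ := (Nat.primeCounting n : ℝ) with hpdef
    have hp1 : (1 : ℝ) ≤ p := by
      have : 1 ≤ Nat.primeCounting n := le_trans (le_max_left _ _) hpc
      rw [hpdef]; exact_mod_cast this
    have hpB : 2 * B ≤ p := by
      have h1 : (⌈2 * B⌉₊ : ℝ) ≤ p := by
        have : ⌈2 * B⌉₊ ≤ Nat.primeCounting n := le_trans (le_max_right _ _) hpc
        rw [hpdef]; exact_mod_cast this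
      linarith [Nat.le_ceil (2 * B)]
    have hpn : p ≤ (n : ℝ) := by
      have := primeCounting_le n
      rw [hpdef]; exact_mod_cast this
    have hlow : s n xm ≤ p / 2 := le_trans (hB n) (by linarith)
    have hhigh : p / 2 ≤ s n xp := by
      have h1 := hC n (by omega)
      have h2 : (2 * C + 2 : ℝ) ≤ (n : ℝ) := by exact_mod_cast hnC
      have h3 : p / 2 ≤ (n : ℝ) - C := by linarith
      linarith
    -- IVT
    have hsubIoo : Set.uIcc xm xp ⊆ Set.Ioo (x₀ - r) (x₀ + r) :=
      (Set.ordConnected_Ioo).uIcc_subset hxm hxp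
    have hmem : p / 2 ∈ Set.uIcc (s n xm) (s n xp) :=
      Set.Icc_subset_uIcc ⟨hlow, hhigh⟩
    obtain ⟨x, hxmem, hxval⟩ := intermediate_value_uIcc ((s_cont n).continuousOn) hmem
    refine ⟨x, hball (hsubIoo hxmem), ?_⟩
    simp only [Set.mem_iUnion, Set.mem_setOf_eq]
    refine ⟨n, hnm, ?_⟩
    rw [hxval]
    constructor
    · rw [div_lt_div_iff₀ (by norm_num) (by norm_num)]
      nlinarith [hp1, hε]
    · rw [div_lt_div_iff₀ (by norm_num) (by norm_num)]
      nlinarith [hp1, hε]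
  exact ⟨dense_iInter_of_isOpen hopen hdense, IsGδ.iInter fun m => (hopen m).isGδ⟩
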